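/- If σ = 1, the optimal number of dinners for the Business Dinner Problem equals max( s, ⌈c/γ⌉, ⌈(s/t)·⌈c/γ⌉⌉ ). -/

import Mathlib

/-- A schedule of `d` dinners for the Business Dinner Problem with `t` tables,
`s` suppliers, `c` customers, at most `σ` suppliers and at most `γ` customers
per table. `supSeat e i = some tb` means supplier `i` sits at table `tb` at
dinner `e` (and `none` means the supplier skips the dinner); similarly for
customers. -/
structure BDSchedule (t s c σ γ d : ℕ) where
  supSeat : Fin d → Fin s → Option (Fin t)
  cusSeat : Fin d → Fin c → Option (Fin t)
  /-- at most `σ` suppliers at each table at each dinner -/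
  supCap : ∀ (e : Fin d) (tb : Fin t),
    (Finset.univ.filter fun i : Fin s => supSeat e i = some tb).card ≤ σ
  /-- at most `γ` customers at each table at each dinner -/
  cusCap : ∀ (e : Fin d) (tb : Fin t),
    (Finset.univ.filter fun k : Fin c => cusSeat e k = some tb).card ≤ γ
  /-- every supplier and customer share a table at exactly one dinner -/
  meetOnce : ∀ (i : Fin s) (k : Fin c), ∃! e : Fin d,
    ∃ tb : Fin t, supSeat e i = some tb ∧ cusSeat e k = some tb
  /-- two distinct suppliers share a table at no more than one dinner -/
  supPairOnce : ∀ i j : Fin s, i ≠ j →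
    (Finset.univ.filter fun e : Fin d =>
      ∃ tb : Fin t, supSeat e i = some tb ∧ supSeat e j = some tb).card ≤ 1

namespace BDaux


/-- ceiling division -/
def cdiv (a b : ℕ) : ℕ := (a + b - 1) / b

theorem cdiv_le_iff {b : ℕ} (hb : 0 < b) {a k : ℕ} : cdiv a b ≤ k ↔ a ≤ b * k := by
  unfold cdiv
  rw [Nat.div_le_iff_le_mul_add_pred hb]
  omega

theorem le_mul_cdiv {b : ℕ} (hb : 0 < b) (a : ℕ) : a ≤ b * cdiv a b :=
  (cdiv_le_iff hb).1 le_rfl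

theorem mul_cdiv_le {b : ℕ} (hb : 0 < b) (a : ℕ) : b * cdiv a b ≤ a + b - 1 := by
  have h1 := Nat.div_mul_le_self (a + b - 1) b
  have h2 : b * cdiv a b = (a + b - 1) / b * b := by unfold cdiv; ring
  omega

theorem ceil_div_eq_cdiv {a b : ℕ} (hb : 0 < b) : ⌈(a : ℚ) / b⌉ = (cdiv a b : ℤ) := by
  have hb' : (0:ℚ) < (b:ℚ) := by exact_mod_cast hb
  have h1 : a ≤ b * cdiv a b := le_mul_cdiv hb a
  have h2 : b * cdiv a b < a + b := by have := mul_cdiv_le hb a; omega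
  have h1' : (a:ℚ) ≤ (b:ℚ) * (cdiv a b : ℚ) := by exact_mod_cast h1
  have h2' : (b:ℚ) * (cdiv a b : ℚ) < (a:ℚ) + b := by exact_mod_cast h2
  rw [Int.ceil_eq_iff]
  refine ⟨?_, ?_⟩
  · push_cast
    rw [lt_div_iff₀ hb']
    nlinarith
  · push_cast
    rw [div_le_iff₀ hb']
    nlinarith

theorem arc_cases {d m e p : ℕ} (hpd : p < d) (he : e < d)
    (hcond : (e + d - p) % d < m) :
    (e + 1 - m ≤ p ∧ p ≤ e) ∨ e + 1 + d - m ≤ p := by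
  rcases le_or_gt p e with hpe | hpe
  · left
    have hmod : (e + d - p) % d = e - p := by
      have h1 : e + d - p = (e - p) + d := by omega
      rw [h1, Nat.add_mod_right, Nat.mod_eq_of_lt (by omega)]
    rw [hmod] at hcond
    omega
  · right
    have hmod : (e + d - p) % d = e + d - p := Nat.mod_eq_of_lt (by omega)
    rw [hmod] at hcond
    omega

theorem card_active_le {d s m t : ℕ} (hs : 0 < s) (hsd : s ≤ d) (hmd : m ≤ d)
    (hsm : s * m ≤ t * d) {e : ℕ} (he : e < d) :
    ((Finset.univ : Finset (Fin s)).filter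
      (fun i : Fin s => (e + d - (i : ℕ) * d / s) % d < m)).card ≤ t := by
  classical
  have hd : 0 < d := lt_of_lt_of_le hs hsd
  have hplt : ∀ i : Fin s, ((i : ℕ) * d / s) < d := by
    intro i
    rw [Nat.div_lt_iff_lt_mul hs]
    calc (i : ℕ) * d < s * d := Nat.mul_lt_mul_of_lt_of_le i.isLt le_rfl hd
      _ = d * s := Nat.mul_comm s d
  have key : ∀ i : Fin s, (e + d - (i : ℕ) * d / s) % d < m →
      ((e + 1 - m) * s ≤ (i : ℕ) * d ∧ (i : ℕ) * d < (e + 1) * s) ∨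
        (e + 1 + d - m) * s ≤ (i : ℕ) * d := by
    intro i hcond
    rcases arc_cases (hplt i) he hcond with ⟨h1, h2⟩ | h1
    · left
      refine ⟨(Nat.le_div_iff_mul_le hs).1 h1, ?_⟩
      exact (Nat.div_lt_iff_lt_mul hs).1 (Nat.lt_succ_of_le h2)
    · right
      exact (Nat.le_div_iff_mul_le hs).1 h1
  have count1 : ((Finset.univ : Finset (Fin s)).filter
      (fun i : Fin s => (e + 1 - m) * s ≤ (i : ℕ) * d ∧ (i : ℕ) * d < (e + 1) * s)).card
      ≤ cdiv ((e + 1) * s) d - cdiv ((e + 1 - m) * s) d := by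
    have h := Finset.card_le_card_of_injOn (fun i : Fin s => (i : ℕ))
      (s := (Finset.univ : Finset (Fin s)).filter
        (fun i : Fin s => (e + 1 - m) * s ≤ (i : ℕ) * d ∧ (i : ℕ) * d < (e + 1) * s))
      (t := Finset.Ico (cdiv ((e + 1 - m) * s) d) (cdiv ((e + 1) * s) d)) ?_ ?_
    · simpa [Nat.card_Ico] using h
    · intro i hi
      simp only [Finset.mem_coe, Finset.mem_filter, Finset.mem_univ, true_and] at hi
      simp only [Finset.mem_coe, Finset.mem_Ico]
      obtain ⟨h1, h2⟩ := hi
      refine ⟨(cdiv_le_iff hd).2 (by rw [Nat.mul_comm d]; exact h1), ?_⟩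
      by_contra hcon
      push_neg at hcon
      have h3 := (cdiv_le_iff hd).1 hcon
      rw [Nat.mul_comm d] at h3
      omega
    · exact fun a _ b _ h => Fin.val_injective h
  have count2 : ((Finset.univ : Finset (Fin s)).filter
      (fun i : Fin s => (e + 1 + d - m) * s ≤ (i : ℕ) * d)).card
      ≤ s - cdiv ((e + 1 + d - m) * s) d := by
    have h := Finset.card_le_card_of_injOn (fun i : Fin s => (i : ℕ))
      (s := (Finset.univ : Finset (Fin s)).filter
        (fun i : Fin s => (e + 1 + d - m) * s ≤ (i : ℕ) * d))
      (t := Finset.Ico (cdiv ((e + 1 + d - m) * s) d) s) ?_ ?_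
    · simpa [Nat.card_Ico] using h
    · intro i hi
      simp only [Finset.mem_coe, Finset.mem_filter, Finset.mem_univ, true_and] at hi
      simp only [Finset.mem_coe, Finset.mem_Ico]
      exact ⟨(cdiv_le_iff hd).2 (by rw [Nat.mul_comm d]; exact hi), i.isLt⟩
    · exact fun a _ b _ h => Fin.val_injective h
  have hsub : ((Finset.univ : Finset (Fin s)).filter
      (fun i : Fin s => (e + d - (i : ℕ) * d / s) % d < m)) ⊆
      ((Finset.univ : Finset (Fin s)).filter
        (fun i : Fin s => (e + 1 - m) * s ≤ (i : ℕ) * d ∧ (i : ℕ) * d < (e + 1) * s)) ∪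
      ((Finset.univ : Finset (Fin s)).filter
        (fun i : Fin s => (e + 1 + d - m) * s ≤ (i : ℕ) * d)) := by
    intro i hi
    simp only [Finset.mem_filter, Finset.mem_univ, true_and] at hi
    rcases key i hi with h | h
    · exact Finset.mem_union_left _ (by simp [h])
    · exact Finset.mem_union_right _ (by simp [h])
  have hcards : ((Finset.univ : Finset (Fin s)).filter
      (fun i : Fin s => (e + d - (i : ℕ) * d / s) % d < m)).card
        ≤ (cdiv ((e + 1) * s) d - cdiv ((e + 1 - m) * s) d)
          + (s - cdiv ((e + 1 + d - m) * s) d) := by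
    calc _ ≤ _ := Finset.card_le_card hsub
      _ ≤ _ + _ := Finset.card_union_le _ _
      _ ≤ _ := Nat.add_le_add count1 count2
  refine le_trans hcards ?_
  have f2 : d * cdiv ((e + 1) * s) d < (e + 1) * s + d := by
    have := mul_cdiv_le hd ((e + 1) * s)
    omega
  have f3 : (e + 1 - m) * s ≤ d * cdiv ((e + 1 - m) * s) d :=
    le_mul_cdiv hd ((e + 1 - m) * s)
  have f4 : (e + 1 + d - m) * s ≤ d * cdiv ((e + 1 + d - m) * s) d :=
    le_mul_cdiv hd ((e + 1 + d - m) * s)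
  have h5 : m * s ≤ t * d := by rw [Nat.mul_comm m s]; exact hsm
  by_cases hm : m ≤ e + 1
  · have hsplit : (e + 1) * s = (e + 1 - m) * s + m * s := by
      rw [Nat.sub_mul, Nat.sub_add_cancel (mul_le_mul_left hm s)]
    have hds : d * s ≤ (e + 1 + d - m) * s := mul_le_mul_left (by omega) s
    have hc3s : s ≤ cdiv ((e + 1 + d - m) * s) d :=
      Nat.le_of_mul_le_mul_left (le_trans hds f4) hd
    have hc21 : cdiv ((e + 1) * s) d ≤ cdiv ((e + 1 - m) * s) d + t := by
      have hlt : d * cdiv ((e + 1) * s) d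
          < d * (cdiv ((e + 1 - m) * s) d + t + 1) := by
        have e2 : d * (cdiv ((e + 1 - m) * s) d + t + 1)
            = d * cdiv ((e + 1 - m) * s) d + t * d + d := by ring
        rw [e2]
        linarith
      have := Nat.lt_of_mul_lt_mul_left hlt
      omega
    omega
  · have hc3le : cdiv ((e + 1 + d - m) * s) d ≤ s :=
      (cdiv_le_iff hd).2 (mul_le_mul_left (by omega) s)
    have hexp : (e + 1 + d - m) * s + m * s = (e + 1) * s + d * s := by
      have h6 : m * s ≤ (e + 1 + d) * s := mul_le_mul_left (by omega) s
      rw [Nat.sub_mul, Nat.sub_add_cancel h6, add_mul]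
    have hkey : cdiv ((e + 1) * s) d + s ≤ cdiv ((e + 1 + d - m) * s) d + t := by
      have hlt : d * (cdiv ((e + 1) * s) d + s)
          < d * (cdiv ((e + 1 + d - m) * s) d + t + 1) := by
        have e1 : d * (cdiv ((e + 1) * s) d + s) = d * cdiv ((e + 1) * s) d + d * s := by
          ring
        have e2 : d * (cdiv ((e + 1 + d - m) * s) d + t + 1)
            = d * cdiv ((e + 1 + d - m) * s) d + t * d + d := by ring
        rw [e1, e2]
        linarith
      have := Nat.lt_of_mul_lt_mul_left hlt
      omega
    omega
theorem mod_char {d e A : ℕ} (hA : A < d) (he : e < d) :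
    (e + d - A) % d = if A ≤ e then e - A else e + d - A := by
  split_ifs with h
  · have h1 : e + d - A = (e - A) + d := by omega
    rw [h1, Nat.add_mod_right, Nat.mod_eq_of_lt (by omega)]
  · exact Nat.mod_eq_of_lt (by omega)

theorem mod_iff {d e g A : ℕ} (hA : A < d) (hg : g < d) (he : e < d) :
    (A + g) % d = e ↔ (e + d - A) % d = g := by
  have h1 : (A + g) % d = if A + g < d then A + g else A + g - d := by
    split_ifs with h
    · exact Nat.mod_eq_of_lt h
    · rw [Nat.mod_eq_sub_mod (le_of_not_gt h)]
      exact Nat.mod_eq_of_lt (by omega)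
  rw [h1, mod_char hA he]
  split_ifs <;> omega

theorem mod_inj {d e A B : ℕ} (hA : A < d) (hB : B < d) (he : e < d)
    (h : (e + d - A) % d = (e + d - B) % d) : A = B := by
  rw [mod_char hA he, mod_char hB he] at h
  split_ifs at h <;> omega

/-- positions of the suppliers -/
def pf (s d i : ℕ) : ℕ := i * d / s

theorem pf_lt {s d : ℕ} (hs : 0 < s) (hd : 0 < d) (i : Fin s) : pf s d (i : ℕ) < d := by
  unfold pf
  rw [Nat.div_lt_iff_lt_mul hs]
  calc (i : ℕ) * d < s * d := Nat.mul_lt_mul_of_lt_of_le i.isLt le_rfl hd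
    _ = d * s := Nat.mul_comm s d

theorem pf_mono {s d : ℕ} (hs : 0 < s) (hsd : s ≤ d) {a b : ℕ} (hab : a < b) :
    pf s d a < pf s d b := by
  unfold pf
  have h1 : a * d + s ≤ b * d := by
    calc a * d + s ≤ a * d + d := by omega
      _ = (a + 1) * d := by ring
      _ ≤ b * d := mul_le_mul_left (by omega) d
  calc a * d / s < a * d / s + 1 := Nat.lt_succ_self _
    _ = (a * d + s) / s := (Nat.add_div_right _ hs).symm
    _ ≤ b * d / s := Nat.div_le_div_right h1

theorem pf_inj {s d : ℕ} (hs : 0 < s) (hsd : s ≤ d) {i j : Fin s}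
    (h : pf s d (i : ℕ) = pf s d (j : ℕ)) : i = j := by
  rcases lt_trichotomy (i : ℕ) (j : ℕ) with hlt | heq | hlt
  · exact absurd h (Nat.ne_of_lt (pf_mono hs hsd hlt))
  · exact Fin.ext heq
  · exact absurd h.symm (Nat.ne_of_lt (pf_mono hs hsd hlt))

/-- suppliers active at dinner `e` -/
def Sset (s d m e : ℕ) : Finset (Fin s) :=
  Finset.univ.filter (fun i : Fin s => (e + d - pf s d (i : ℕ)) % d < m)

/-- rank of supplier `i` among active suppliers: its table index -/
def rk (s d m e : ℕ) (i : Fin s) : ℕ :=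
  ((Sset s d m e).filter (fun j : Fin s => (j : ℕ) < (i : ℕ))).card

/-- suppliers meeting customer-group `g` at dinner `e` -/
def Tset (s d e g : ℕ) : Finset (Fin s) :=
  Finset.univ.filter (fun i : Fin s => (e + d - pf s d (i : ℕ)) % d = g)

def supSeatF (t s d m e : ℕ) (i : Fin s) : Option (Fin t) :=
  if h : i ∈ Sset s d m e ∧ rk s d m e i < t then some ⟨rk s d m e i, h.2⟩ else none

noncomputable def cusSeatF (t s c d m γ e : ℕ) (k : Fin c) : Option (Fin t) :=
  if h : (Tset s d e ((k : ℕ) / γ)).Nonempty then supSeatF t s d m e h.choose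
  else none

theorem Tset_uniq {s d : ℕ} (hs : 0 < s) (hsd : s ≤ d) {e g : ℕ} (he : e < d)
    {a b : Fin s} (ha : a ∈ Tset s d e g) (hb : b ∈ Tset s d e g) : a = b := by
  have hd : 0 < d := lt_of_lt_of_le hs hsd
  rw [Tset, Finset.mem_filter] at ha hb
  exact pf_inj hs hsd (mod_inj (pf_lt hs hd a) (pf_lt hs hd b) he
    (ha.2.trans hb.2.symm))

theorem Tset_mem_Sset {s d m e g : ℕ} (hg : g < m) {i : Fin s}
    (hi : i ∈ Tset s d e g) : i ∈ Sset s d m e := by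
  rw [Tset, Finset.mem_filter] at hi
  rw [Sset, Finset.mem_filter]
  exact ⟨hi.1, hi.2 ▸ hg⟩
theorem rk_lt_card {s d m e : ℕ} {i : Fin s} (hi : i ∈ Sset s d m e) :
    rk s d m e i < (Sset s d m e).card := by
  apply Finset.card_lt_card
  rw [Finset.ssubset_iff_of_subset (Finset.filter_subset _ _)]
  exact ⟨i, hi, by simp⟩

theorem rk_mono {s d m e : ℕ} {i j : Fin s} (hi : i ∈ Sset s d m e)
    (hij : (i : ℕ) < (j : ℕ)) : rk s d m e i < rk s d m e j := by
  apply Finset.card_lt_card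
  constructor
  · intro x hx
    rw [Finset.mem_filter] at hx ⊢
    exact ⟨hx.1, lt_trans hx.2 hij⟩
  · intro hcon
    have : i ∈ (Sset s d m e).filter (fun j' : Fin s => (j' : ℕ) < (j : ℕ)) := by
      rw [Finset.mem_filter]; exact ⟨hi, hij⟩
    have h2 := hcon this
    rw [Finset.mem_filter] at h2
    exact lt_irrefl _ h2.2

theorem rk_inj {s d m e : ℕ} {i j : Fin s} (hi : i ∈ Sset s d m e)
    (hj : j ∈ Sset s d m e) (h : rk s d m e i = rk s d m e j) : i = j := by
  rcases lt_trichotomy (i : ℕ) (j : ℕ) with hlt | heq | hlt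
  · exact absurd h (Nat.ne_of_lt (rk_mono hi hlt))
  · exact Fin.ext heq
  · exact absurd h.symm (Nat.ne_of_lt (rk_mono hj hlt))

theorem supSeatF_someD {t s d m e : ℕ} {i : Fin s} {tb : Fin t}
    (h : supSeatF t s d m e i = some tb) :
    i ∈ Sset s d m e ∧ rk s d m e i = (tb : ℕ) := by
  rw [supSeatF] at h
  split_ifs at h with hc
  exact ⟨hc.1, by simpa [Fin.ext_iff] using (Option.some_injective _ h)⟩

theorem supSeatF_eq {t s d m e : ℕ} {i : Fin s} (hi : i ∈ Sset s d m e)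
    (hlt : rk s d m e i < t) :
    supSeatF t s d m e i = some ⟨rk s d m e i, hlt⟩ := by
  rw [supSeatF, dif_pos ⟨hi, hlt⟩]

theorem cusSeatF_of_mem {t s c d m γ e : ℕ} (hs : 0 < s) (hsd : s ≤ d) (he : e < d)
    {k : Fin c} {i : Fin s} (hi : i ∈ Tset s d e ((k : ℕ) / γ)) :
    cusSeatF t s c d m γ e k = supSeatF t s d m e i := by
  rw [cusSeatF, dif_pos ⟨i, hi⟩]
  congr 1
  exact Tset_uniq hs hsd he (Exists.choose_spec (⟨i, hi⟩ : (Tset s d e ((k : ℕ)/γ)).Nonempty)) hi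

theorem cusSeatF_someD {t s c d m γ e : ℕ} {k : Fin c} {tb : Fin t}
    (h : cusSeatF t s c d m γ e k = some tb) :
    ∃ i : Fin s, i ∈ Tset s d e ((k : ℕ) / γ) ∧ supSeatF t s d m e i = some tb := by
  rw [cusSeatF] at h
  split_ifs at h with hc
  exact ⟨hc.choose, hc.choose_spec, h⟩
set_option maxHeartbeats 2000000 in
theorem exists_schedule {t s c γ d : ℕ} (hγ : 1 ≤ γ) (hs : 1 ≤ s) (hc : 1 ≤ c)
    (hsd : s ≤ d) (hmd : cdiv c γ ≤ d) (hsm : s * cdiv c γ ≤ t * d) :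
    Nonempty (BDSchedule t s c 1 γ d) := by
  classical
  set m := cdiv c γ with hm
  have hd : 0 < d := lt_of_lt_of_le hs hsd
  have hcm : c ≤ γ * m := le_mul_cdiv hγ c
  have hglt : ∀ k : Fin c, (k : ℕ) / γ < m := by
    intro k
    rw [Nat.div_lt_iff_lt_mul hγ]
    calc (k : ℕ) < c := k.isLt
      _ ≤ γ * m := hcm
      _ = m * γ := Nat.mul_comm γ m
  have hmd' : m ≤ d := hmd
  have hScard : ∀ e : ℕ, e < d → (Sset s d m e).card ≤ t := by
    intro e he
    have := card_active_le hs hsd hmd' hsm he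
    unfold Sset pf
    convert this
  have hrk_lt : ∀ e : ℕ, e < d → ∀ i : Fin s, i ∈ Sset s d m e →
      rk s d m e i < t := fun e he i hi => lt_of_lt_of_le (rk_lt_card hi) (hScard e he)
  refine ⟨⟨fun e i => supSeatF t s d m (e : ℕ) i,
           fun e k => cusSeatF t s c d m γ (e : ℕ) k, ?_, ?_, ?_, ?_⟩⟩
  · -- supCap
    intro e tb
    rw [Finset.card_le_one]
    intro i hi j hj
    rw [Finset.mem_filter] at hi hj
    obtain ⟨hi1, hi2⟩ := supSeatF_someD hi.2
    obtain ⟨hj1, hj2⟩ := supSeatF_someD hj.2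
    exact rk_inj hi1 hj1 (hi2.trans hj2.symm)
  · -- cusCap
    intro e tb
    rcases Finset.eq_empty_or_nonempty
      (Finset.univ.filter fun k : Fin c => cusSeatF t s c d m γ (e : ℕ) k = some tb)
      with hemp | ⟨k0, hk0⟩
    · rw [hemp]; simp
    · rw [Finset.mem_filter] at hk0
      obtain ⟨i0, hi0T, hi0sup⟩ := cusSeatF_someD hk0.2
      obtain ⟨hi0S, hi0rk⟩ := supSeatF_someD hi0sup
      have hsub : (Finset.univ.filter fun k : Fin c =>
          cusSeatF t s c d m γ (e : ℕ) k = some tb) ⊆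
          (Finset.univ.filter fun k : Fin c => (k : ℕ) / γ = (k0 : ℕ) / γ) := by
        intro k hk
        rw [Finset.mem_filter] at hk ⊢
        refine ⟨hk.1, ?_⟩
        obtain ⟨i, hiT, hisup⟩ := cusSeatF_someD hk.2
        obtain ⟨hiS, hirk⟩ := supSeatF_someD hisup
        have : i = i0 := rk_inj hiS hi0S (hirk.trans hi0rk.symm)
        subst this
        rw [Tset, Finset.mem_filter] at hiT hi0T
        exact hiT.2.symm.trans hi0T.2
      refine le_trans (Finset.card_le_card hsub) ?_
      have h := Finset.card_le_card_of_injOn (fun k : Fin c => (k : ℕ) % γ)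
        (s := Finset.univ.filter fun k : Fin c => (k : ℕ) / γ = (k0 : ℕ) / γ)
        (t := Finset.range γ) ?_ ?_
      · simpa using h
      · intro k _
        rw [Finset.mem_coe, Finset.mem_range]
        exact Nat.mod_lt _ hγ
      · intro a ha b hb hab
        rw [Finset.mem_coe, Finset.mem_filter] at ha hb
        have hm' : (a : ℕ) % γ = (b : ℕ) % γ := hab
        have hd' : (a : ℕ) / γ = (b : ℕ) / γ := ha.2.trans hb.2.symm
        have h1 := Nat.div_add_mod (a : ℕ) γ
        have h2 := Nat.div_add_mod (b : ℕ) γ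
        have e1 : γ * ((a : ℕ) / γ) = γ * ((b : ℕ) / γ) := by rw [hd']
        apply Fin.ext
        omega
  · -- meetOnce
    intro i k
    have hgd : (k : ℕ) / γ < d := lt_of_lt_of_le (hglt k) hmd'
    have hpd : pf s d (i : ℕ) < d := pf_lt hs hd i
    set E := (pf s d (i : ℕ) + (k : ℕ) / γ) % d with hE
    have hEd : E < d := Nat.mod_lt _ hd
    refine ⟨⟨E, hEd⟩, ?_, ?_⟩
    · have hiT : i ∈ Tset s d E ((k : ℕ) / γ) := by
        rw [Tset, Finset.mem_filter]
        exact ⟨Finset.mem_univ i, (mod_iff hpd hgd hEd).1 rfl⟩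
      have hiS : i ∈ Sset s d m E := Tset_mem_Sset (hglt k) hiT
      refine ⟨⟨rk s d m E i, hrk_lt E hEd i hiS⟩, supSeatF_eq hiS _, ?_⟩
      show cusSeatF t s c d m γ E k = _
      rw [cusSeatF_of_mem hs hsd hEd hiT]
      exact supSeatF_eq hiS _
    · rintro e' ⟨tb, hsup, hcus⟩
      obtain ⟨j, hjT, hjsup⟩ := cusSeatF_someD hcus
      obtain ⟨hjS, hjrk⟩ := supSeatF_someD hjsup
      obtain ⟨hiS, hirk⟩ := supSeatF_someD hsup
      have : j = i := rk_inj hjS hiS (hjrk.trans hirk.symm)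
      subst this
      rw [Tset, Finset.mem_filter] at hjT
      apply Fin.ext
      exact ((mod_iff hpd hgd e'.isLt).2 hjT.2).symm
  · -- supPairOnce
    intro i j hij
    have : (Finset.univ.filter fun e : Fin d =>
        ∃ tb : Fin t, supSeatF t s d m (e : ℕ) i = some tb ∧
          supSeatF t s d m (e : ℕ) j = some tb) = ∅ := by
      rw [Finset.filter_eq_empty_iff]
      rintro e _ ⟨tb, h1, h2⟩
      obtain ⟨hi1, hi2⟩ := supSeatF_someD h1
      obtain ⟨hj1, hj2⟩ := supSeatF_someD h2
      exact hij (rk_inj hi1 hj1 (hi2.trans hj2.symm))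
    rw [this]
    simp
theorem meet_count {t s c γ d : ℕ} (hγ : 1 ≤ γ) (B : BDSchedule t s c 1 γ d)
    (i0 : Fin s) :
    c ≤ γ * (Finset.univ.filter fun e : Fin d => (B.supSeat e i0).isSome).card := by
  classical
  set f : Fin c → Fin d := fun k => (B.meetOnce i0 k).choose with hf
  have hspec : ∀ k : Fin c, ∃ tb : Fin t,
      B.supSeat (f k) i0 = some tb ∧ B.cusSeat (f k) k = some tb :=
    fun k => (B.meetOnce i0 k).choose_spec.1
  have hmaps : ∀ k : Fin c, k ∈ (Finset.univ : Finset (Fin c)) →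
      f k ∈ Finset.univ.filter fun e : Fin d => (B.supSeat e i0).isSome := by
    intro k _
    rw [Finset.mem_filter]
    obtain ⟨tb, h1, _⟩ := hspec k
    exact ⟨Finset.mem_univ _, by rw [h1]; rfl⟩
  have hfib : ∀ e ∈ (Finset.univ.filter fun e : Fin d => (B.supSeat e i0).isSome),
      ((Finset.univ : Finset (Fin c)).filter fun k => f k = e).card ≤ γ := by
    intro e _
    rcases Finset.eq_empty_or_nonempty
      ((Finset.univ : Finset (Fin c)).filter fun k => f k = e) with hemp | ⟨k1, hk1⟩
    · rw [hemp]; simp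
    · rw [Finset.mem_filter] at hk1
      obtain ⟨tb1, hs1, hc1⟩ := hspec k1
      rw [hk1.2] at hs1
      have hsub : ((Finset.univ : Finset (Fin c)).filter fun k => f k = e) ⊆
          Finset.univ.filter fun k : Fin c => B.cusSeat e k = some tb1 := by
        intro k hk
        rw [Finset.mem_filter] at hk ⊢
        obtain ⟨tb, hs', hc'⟩ := hspec k
        rw [hk.2] at hs' hc'
        rw [hs1] at hs'
        exact ⟨Finset.mem_univ _, by rw [hc', Option.some_injective _ hs'.symm]⟩
      exact le_trans (Finset.card_le_card hsub) (B.cusCap e tb1)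
  calc c = (Finset.univ : Finset (Fin c)).card := by simp
    _ ≤ γ * (Finset.univ.filter fun e : Fin d => (B.supSeat e i0).isSome).card :=
      Finset.card_le_mul_card_image_of_maps_to hmaps γ hfib

theorem le_of_schedule {t s c γ d : ℕ} (ht : 1 ≤ t) (hγ : 1 ≤ γ) (hs : 1 ≤ s)
    (hc : 1 ≤ c) (B : BDSchedule t s c 1 γ d) :
    s ≤ d ∧ cdiv c γ ≤ d ∧ cdiv (s * cdiv c γ) t ≤ d := by
  classical
  refine ⟨?_, ?_, ?_⟩
  · -- every supplier meets customer 0 at a distinct dinner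
    set k0 : Fin c := ⟨0, hc⟩ with hk0
    set f : Fin s → Fin d := fun i => (B.meetOnce i k0).choose with hf
    have hspec : ∀ i : Fin s, ∃ tb : Fin t,
        B.supSeat (f i) i = some tb ∧ B.cusSeat (f i) k0 = some tb :=
      fun i => (B.meetOnce i k0).choose_spec.1
    have hinj : Function.Injective f := by
      intro i j hij
      obtain ⟨tb1, h1s, h1c⟩ := hspec i
      obtain ⟨tb2, h2s, h2c⟩ := hspec j
      rw [hij] at h1s h1c
      rw [h1c] at h2c
      have htb : tb2 = tb1 := (Option.some_injective _ h2c).symm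
      rw [htb] at h2s
      refine Finset.card_le_one.1 (B.supCap (f j) tb1) i ?_ j ?_ <;>
        · rw [Finset.mem_filter]
          exact ⟨Finset.mem_univ _, by assumption⟩
    have := Fintype.card_le_of_injective f hinj
    simpa using this
  · rw [cdiv_le_iff hγ]
    calc c ≤ γ * (Finset.univ.filter fun e : Fin d => (B.supSeat e ⟨0, hs⟩).isSome).card :=
        meet_count hγ B ⟨0, hs⟩
      _ ≤ γ * d := by
        apply Nat.mul_le_mul_left
        calc (Finset.univ.filter fun e : Fin d => (B.supSeat e ⟨0, hs⟩).isSome).card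
            ≤ (Finset.univ : Finset (Fin d)).card := Finset.card_le_card (Finset.filter_subset _ _)
          _ = d := by simp
  · rw [cdiv_le_iff ht]
    set P : Finset (Fin s × Fin d) :=
      Finset.univ.filter (fun x : Fin s × Fin d => (B.supSeat x.2 x.1).isSome) with hP
    have hupper : P.card ≤ t * d := by
      have hmaps : ∀ x ∈ P, x.2 ∈ (Finset.univ : Finset (Fin d)) := fun x _ => Finset.mem_univ _
      have hfib : ∀ e ∈ (Finset.univ : Finset (Fin d)),
          (P.filter fun x => x.2 = e).card ≤ t := by
        intro e _
        have h := Finset.card_le_card_of_injOn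
          (fun x : Fin s × Fin d => (B.supSeat x.2 x.1).getD ⟨0, ht⟩)
          (s := P.filter fun x => x.2 = e) (t := (Finset.univ : Finset (Fin t))) ?_ ?_
        · simpa using h
        · exact fun x _ => Finset.mem_univ _
        · intro x hx y hy hxy
          rw [Finset.mem_coe, Finset.mem_filter, Finset.mem_filter] at hx hy
          obtain ⟨⟨_, hx1⟩, hx2⟩ := hx
          obtain ⟨⟨_, hy1⟩, hy2⟩ := hy
          obtain ⟨tbx, htbx⟩ := Option.isSome_iff_exists.1 hx1
          obtain ⟨tby, htby⟩ := Option.isSome_iff_exists.1 hy1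
          rw [hx2] at htbx
          rw [hy2] at htby
          simp only [htbx, htby, hx2, hy2, Option.getD_some] at hxy
          subst hxy
          have hxy1 : x.1 = y.1 := by
            refine Finset.card_le_one.1 (B.supCap e tbx) x.1 ?_ y.1 ?_ <;>
              · rw [Finset.mem_filter]
                exact ⟨Finset.mem_univ _, by assumption⟩
          exact Prod.ext hxy1 (hx2.trans hy2.symm)
      calc P.card ≤ t * (Finset.univ : Finset (Fin d)).card :=
          Finset.card_le_mul_card_image_of_maps_to hmaps t hfib
        _ = t * d := by simp
    have hlower : s * cdiv c γ ≤ P.card := by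
      have hsum : P.card = ∑ i ∈ (Finset.univ : Finset (Fin s)),
          (P.filter fun x => x.1 = i).card :=
        Finset.card_eq_sum_card_fiberwise (fun x _ => Finset.mem_univ x.1)
      have hfiblow : ∀ i ∈ (Finset.univ : Finset (Fin s)),
          cdiv c γ ≤ (P.filter fun x => x.1 = i).card := by
        intro i _
        have hEcard : cdiv c γ
            ≤ (Finset.univ.filter fun e : Fin d => (B.supSeat e i).isSome).card := by
          rw [cdiv_le_iff hγ]
          exact meet_count hγ B i
        refine le_trans hEcard ?_
        apply Finset.card_le_card_of_injOn (fun e : Fin d => (i, e))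
        · intro e he
          rw [Finset.mem_coe, Finset.mem_filter] at he ⊢
          rw [hP, Finset.mem_filter]
          exact ⟨⟨Finset.mem_univ _, he.2⟩, rfl⟩
        · intro a _ b _ hab
          exact congrArg Prod.snd hab
      have hconst : ∑ _i ∈ (Finset.univ : Finset (Fin s)), cdiv c γ = s * cdiv c γ := by
        rw [Finset.sum_const, Finset.card_univ, Fintype.card_fin, smul_eq_mul]
      rw [hsum, ← hconst]
      exact Finset.sum_le_sum hfiblow
    exact le_trans hlower hupper

end BDaux

open BDaux

/-- If `σ = 1`, the optimal number of dinners is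
`max(s, ⌈c/γ⌉, ⌈(s/t)·⌈c/γ⌉⌉)`. -/
theorem business_dinner_sigma_one (t s c γ : ℕ)
    (ht : 1 ≤ t) (hγ : 1 ≤ γ) (hs : 1 ≤ s) (hc : 1 ≤ c) :
    IsLeast {d : ℕ | Nonempty (BDSchedule t s c 1 γ d)}
      (max s (max (⌈(c : ℚ) / γ⌉.toNat)
        (⌈(s : ℚ) / t * (⌈(c : ℚ) / γ⌉ : ℚ)⌉.toNat))) := by
  have hM1 : (⌈(c : ℚ) / γ⌉).toNat = cdiv c γ := by
    rw [ceil_div_eq_cdiv hγ, Int.toNat_natCast]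
  have hM2 : (⌈(s : ℚ) / t * (⌈(c : ℚ) / γ⌉ : ℚ)⌉).toNat = cdiv (s * cdiv c γ) t := by
    rw [ceil_div_eq_cdiv hγ]
    have h1 : (s : ℚ) / t * ((cdiv c γ : ℤ) : ℚ) = ((s * cdiv c γ : ℕ) : ℚ) / t := by
      push_cast
      ring
    rw [h1, ceil_div_eq_cdiv ht, Int.toNat_natCast]
  rw [hM1, hM2]
  set D := max s (max (cdiv c γ) (cdiv (s * cdiv c γ) t)) with hD
  constructor
  · have hsd : s ≤ D := le_max_left _ _
    have hmd : cdiv c γ ≤ D := le_trans (le_max_left _ _) (le_max_right _ _)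
    have hsm : s * cdiv c γ ≤ t * D :=
      (cdiv_le_iff ht).1 (le_trans (le_max_right _ _) (le_max_right _ _))
    exact exists_schedule hγ hs hc hsd hmd hsm
  · rintro d ⟨B⟩
    obtain ⟨h1, h2, h3⟩ := le_of_schedule ht hγ hs hc B
    exact max_le h1 (max_le h2 h3)
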